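/- arXiv:2007.02644 — 3 statements merged into one kernel-verified Lean document; each statement's English description precedes it below -/
import Mathlib

section
/- Let A be a commutative ring that is an algebra over ℚ, and let u, v ∈ A be nilpotent elements. Set w := u + v − u·v, so that (1−u)(1−v) = 1−w. Then w is nilpotent, and for every natural number M with u^{M+1} = 0, v^{M+1} = 0 and w^{M+1} = 0 one has the identity −∑_{n=1}^{M} (1/n)·wⁿ = (−∑_{n=1}^{M} (1/n)·uⁿ) + (−∑_{n=1}^{M} (1/n)·vⁿ) in A; that is, ln((1−u)(1−v)) = ln(1−u) + ln(1−v). -/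
open MvPolynomial Finset

namespace LogMulNilpotentAux

/-- `lo d p` : every monomial of `p` has total degree `≥ d`. -/
def lo (d : ℕ) (p : MvPolynomial (Fin 2) ℚ) : Prop :=
  ∀ m : Fin 2 →₀ ℕ, m 0 + m 1 < d → MvPolynomial.coeff m p = 0

lemma lo_mono {d e : ℕ} (h : e ≤ d) {p} (hp : lo d p) : lo e p :=
  fun m hm => hp m (lt_of_lt_of_le hm h)

lemma lo_zero (d : ℕ) : lo d (0 : MvPolynomial (Fin 2) ℚ) := by
  intro m _; simp

lemma lo_add {d : ℕ} {p q} (hp : lo d p) (hq : lo d q) : lo d (p + q) := by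
  intro m hm; rw [MvPolynomial.coeff_add, hp m hm, hq m hm, add_zero]

lemma lo_neg {d : ℕ} {p} (hp : lo d p) : lo d (-p) := by
  intro m hm; rw [MvPolynomial.coeff_neg, hp m hm, neg_zero]

lemma lo_sub {d : ℕ} {p q} (hp : lo d p) (hq : lo d q) : lo d (p - q) := by
  rw [sub_eq_add_neg]; exact lo_add hp (lo_neg hq)

lemma lo_smul {d : ℕ} (c : ℚ) {p} (hp : lo d p) : lo d (c • p) := by
  intro m hm; rw [MvPolynomial.coeff_smul, hp m hm, smul_zero]

lemma lo_sum {d : ℕ} {ι : Type*} (s : Finset ι) (f : ι → MvPolynomial (Fin 2) ℚ)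
    (h : ∀ i ∈ s, lo d (f i)) : lo d (∑ i ∈ s, f i) := by
  intro m hm
  rw [MvPolynomial.coeff_sum]
  exact Finset.sum_eq_zero fun i hi => h i hi m hm

lemma lo_mul {a b : ℕ} {p q} (hp : lo a p) (hq : lo b q) : lo (a + b) (p * q) := by
  intro m hm
  rw [MvPolynomial.coeff_mul]
  refine Finset.sum_eq_zero fun x hx => ?_
  rw [Finset.HasAntidiagonal.mem_antidiagonal] at hx
  have h0 : x.1 0 + x.2 0 = m 0 := by rw [← hx]; simp
  have h1 : x.1 1 + x.2 1 = m 1 := by rw [← hx]; simp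
  by_cases hxa : x.1 0 + x.1 1 < a
  · rw [hp x.1 hxa, zero_mul]
  · have : x.2 0 + x.2 1 < b := by omega
    rw [hq x.2 this, mul_zero]

lemma lo_pow {t : MvPolynomial (Fin 2) ℚ} (ht : lo 1 t) (n : ℕ) : lo n (t ^ n) := by
  induction n with
  | zero => intro m hm; omega
  | succ k ih =>
    rw [pow_succ]
    exact lo_mul ih ht


/-- `X i * ∂_i (monomial s a) = monomial s (s i • a)` -/
lemma X_mul_pderiv_monomial (i : Fin 2) (s : Fin 2 →₀ ℕ) (a : ℚ) :
    X i * pderiv i (monomial s a) = monomial s ((s i : ℚ) * a) := by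
  rw [pderiv_monomial]
  by_cases h : s i = 0
  · rw [h]; simp
  · have hle : Finsupp.single i 1 ≤ s := by
      rw [Finsupp.single_le_iff]; omega
    rw [X, monomial_mul, one_mul, add_tsub_cancel_of_le hle, mul_comm a]

lemma euler_coeff (p : MvPolynomial (Fin 2) ℚ) (m : Fin 2 →₀ ℕ) :
    MvPolynomial.coeff m (X 0 * pderiv 0 p + X 1 * pderiv 1 p)
      = ((m 0 + m 1 : ℕ) : ℚ) * MvPolynomial.coeff m p := by
  induction p using MvPolynomial.induction_on' with
  | monomial s a =>
    rw [X_mul_pderiv_monomial, X_mul_pderiv_monomial, MvPolynomial.coeff_add,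
      coeff_monomial, coeff_monomial, coeff_monomial]
    by_cases h : s = m
    · subst h; simp only [if_true]; push_cast; ring
    · simp [h]
  | add p q hp hq =>
    simp only [map_add, mul_add, MvPolynomial.coeff_add] at *
    linear_combination hp + hq

/-- cancellation: if `q` has no constant term and `(1-q)*D` has all monomials of
degree `≥ K`, so does `D`. -/
lemma lo_cancel {q D : MvPolynomial (Fin 2) ℚ} (hq : lo 1 q) {K : ℕ}
    (h : lo K ((1 - q) * D)) : lo K D := by
  intro m hm
  suffices H : ∀ n : ℕ, ∀ m : Fin 2 →₀ ℕ, m 0 + m 1 = n → m 0 + m 1 < K →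
      MvPolynomial.coeff m D = 0 from H _ m rfl hm
  intro n
  induction n using Nat.strong_induction_on with
  | _ n ih =>
    intro m hmn hmK
    have h1 : MvPolynomial.coeff m ((1 - q) * D) = 0 := h m hmK
    rw [sub_mul, one_mul, MvPolynomial.coeff_sub, sub_eq_zero] at h1
    rw [h1, MvPolynomial.coeff_mul]
    refine Finset.sum_eq_zero fun x hx => ?_
    rw [Finset.HasAntidiagonal.mem_antidiagonal] at hx
    have h0 : x.1 0 + x.2 0 = m 0 := by rw [← hx]; simp
    have h1' : x.1 1 + x.2 1 = m 1 := by rw [← hx]; simp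
    by_cases hx1 : x.1 0 + x.1 1 = 0
    · rw [hq x.1 (by omega), zero_mul]
    · rw [ih (x.2 0 + x.2 1) (by omega) x.2 rfl (by omega), mul_zero]


lemma inv_smul_cast_mul {n : ℕ} (hn : n ≠ 0) (t : MvPolynomial (Fin 2) ℚ) :
    ((n:ℚ)⁻¹) • ((n : MvPolynomial (Fin 2) ℚ) * t) = t := by
  rw [← nsmul_eq_mul, ← Nat.cast_smul_eq_nsmul ℚ, smul_smul,
    inv_mul_cancel₀ (by exact_mod_cast hn), one_smul]

lemma pderiv_logSum (K : ℕ) (i : Fin 2) (f : MvPolynomial (Fin 2) ℚ) :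
    pderiv i (∑ n ∈ Finset.Icc 1 K, ((n:ℚ)⁻¹) • f ^ n)
      = (∑ n ∈ Finset.range K, f ^ n) * pderiv i f := by
  rw [map_sum, Finset.sum_mul]
  have h1 : ∀ n ∈ Finset.Icc 1 K, pderiv i (((n:ℚ)⁻¹) • f ^ n) = f ^ (n-1) * pderiv i f := by
    intro n hn
    rw [Finset.mem_Icc] at hn
    rw [Derivation.map_smul, pderiv_pow, mul_assoc, inv_smul_cast_mul (by omega)]
  rw [Finset.sum_congr rfl h1, ← Finset.Ico_add_one_right_eq_Icc, Finset.sum_Ico_eq_sum_range]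
  simp

lemma geom (K : ℕ) (t : MvPolynomial (Fin 2) ℚ) :
    (1 - t) * ∑ n ∈ Finset.range K, t ^ n = 1 - t ^ K := by
  linear_combination (-1 : MvPolynomial (Fin 2) ℚ) * geom_sum_mul t K

lemma coeff_P_eq_zero (M : ℕ) (m : Fin 2 →₀ ℕ) (hm0 : m 0 ≤ M) (hm1 : m 1 ≤ M) :
    MvPolynomial.coeff m
      ((∑ n ∈ Finset.Icc 1 (2*M+2), ((n:ℚ)⁻¹) • (X 0 + X 1 - X 0 * X 1) ^ n)
        - (∑ n ∈ Finset.Icc 1 (2*M+2), ((n:ℚ)⁻¹) • (X 0 : MvPolynomial (Fin 2) ℚ) ^ n)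
        - (∑ n ∈ Finset.Icc 1 (2*M+2), ((n:ℚ)⁻¹) • (X 1 : MvPolynomial (Fin 2) ℚ) ^ n)) = 0 := by
  set K := 2*M+2 with hK
  set w : MvPolynomial (Fin 2) ℚ := X 0 + X 1 - X 0 * X 1 with hw
  set P : MvPolynomial (Fin 2) ℚ :=
    (∑ n ∈ Finset.Icc 1 K, ((n:ℚ)⁻¹) • w ^ n)
      - (∑ n ∈ Finset.Icc 1 K, ((n:ℚ)⁻¹) • (X 0 : MvPolynomial (Fin 2) ℚ) ^ n)
      - (∑ n ∈ Finset.Icc 1 K, ((n:ℚ)⁻¹) • (X 1 : MvPolynomial (Fin 2) ℚ) ^ n) with hP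
  -- low-degree facts
  have hzero : ∀ m' : Fin 2 →₀ ℕ, m' 0 + m' 1 < 1 → m' = 0 := by
    intro m' h
    ext j; fin_cases j <;> simp <;> omega
  have hlow : lo 1 w := by
    intro m' h
    rw [hzero m' h, hw]
    simp [← MvPolynomial.constantCoeff_eq]
  have hloX : ∀ i : Fin 2, lo 1 (X i : MvPolynomial (Fin 2) ℚ) := by
    intro i m' h
    rw [hzero m' h]
    simp [← MvPolynomial.constantCoeff_eq]
  have hloSum : ∀ f : MvPolynomial (Fin 2) ℚ, lo 1 f →
      lo 1 (∑ n ∈ Finset.Icc 1 K, ((n:ℚ)⁻¹) • f ^ n) := by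
    intro f hf
    refine lo_sum _ _ fun n hn => lo_smul _ (lo_mono ?_ (lo_pow hf n))
    exact (Finset.mem_Icc.mp hn).1
  have hloP : lo 1 P := by
    rw [hP]
    exact lo_sub (lo_sub (hloSum w hlow) (hloSum _ (hloX 0))) (hloSum _ (hloX 1))
  -- derivatives
  have hd0w : pderiv (0:Fin 2) w = 1 - X 1 := by
    rw [hw]
    rw [map_sub, map_add, pderiv_mul, pderiv_X_self, pderiv_X_of_ne (by decide)]
    ring
  have hd1w : pderiv (1:Fin 2) w = 1 - X 0 := by
    rw [hw]
    rw [map_sub, map_add, pderiv_mul, pderiv_X_self, pderiv_X_of_ne (by decide)]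
    ring
  have hD0 : pderiv (0:Fin 2) P
      = (∑ n ∈ Finset.range K, w ^ n) * (1 - X 1) - ∑ n ∈ Finset.range K, (X 0:MvPolynomial (Fin 2) ℚ) ^ n := by
    rw [hP, map_sub, map_sub, pderiv_logSum, pderiv_logSum, pderiv_logSum, hd0w,
      pderiv_X_self, pderiv_X_of_ne (by decide), mul_one, mul_zero, sub_zero]
  have hD1 : pderiv (1:Fin 2) P
      = (∑ n ∈ Finset.range K, w ^ n) * (1 - X 0) - ∑ n ∈ Finset.range K, (X 1:MvPolynomial (Fin 2) ℚ) ^ n := by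
    rw [hP, map_sub, map_sub, pderiv_logSum, pderiv_logSum, pderiv_logSum, hd1w,
      pderiv_X_self, pderiv_X_of_ne (by decide), mul_one, mul_zero]
    ring
  have hww : (1:MvPolynomial (Fin 2) ℚ) - w = (1 - X 0) * (1 - X 1) := by rw [hw]; ring
  have hkey0 : (1 - w) * pderiv (0:Fin 2) P = (1 - X 1) * ((X 0:MvPolynomial (Fin 2) ℚ) ^ K - w ^ K) := by
    rw [hD0]
    linear_combination (1 - X 1) * geom K w - (1 - X 1) * geom K (X 0)
      - (∑ n ∈ Finset.range K, (X 0:MvPolynomial (Fin 2) ℚ) ^ n) * hww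
  have hkey1 : (1 - w) * pderiv (1:Fin 2) P = (1 - X 0) * ((X 1:MvPolynomial (Fin 2) ℚ) ^ K - w ^ K) := by
    rw [hD1]
    linear_combination (1 - X 0) * geom K w - (1 - X 0) * geom K (X 1)
      - (∑ n ∈ Finset.range K, (X 1:MvPolynomial (Fin 2) ℚ) ^ n) * hww
  have hlo01 : ∀ i j : Fin 2, lo K ((1 - X j) * ((X i:MvPolynomial (Fin 2) ℚ) ^ K - w ^ K)) := by
    intro i j
    have h1 : lo 0 ((1:MvPolynomial (Fin 2) ℚ) - X j) := fun _ h => absurd h (Nat.not_lt_zero _)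
    have h2 : lo K ((X i:MvPolynomial (Fin 2) ℚ) ^ K - w ^ K) :=
      lo_sub (lo_pow (hloX i) K) (lo_pow hlow K)
    simpa using lo_mul h1 h2
  have hlo0 : lo K (pderiv (0:Fin 2) P) := by
    refine lo_cancel hlow ?_
    rw [hkey0]
    exact hlo01 0 1
  have hlo1 : lo K (pderiv (1:Fin 2) P) := by
    refine lo_cancel hlow ?_
    rw [hkey1]
    exact hlo01 1 0
  -- conclude via Euler relation
  by_cases hm : m 0 + m 1 = 0
  · exact hloP m (by omega)
  · have he := euler_coeff P m
    have hE : MvPolynomial.coeff m (X 0 * pderiv 0 P + X 1 * pderiv 1 P) = 0 := by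
      refine lo_add (d := K) ?_ ?_ m (by omega)
      · exact lo_mono (by omega) (lo_mul (hloX 0) hlo0)
      · exact lo_mono (by omega) (lo_mul (hloX 1) hlo1)
    rw [hE] at he
    have : ((m 0 + m 1 : ℕ) : ℚ) ≠ 0 := by exact_mod_cast hm
    exact (mul_eq_zero.mp he.symm).resolve_left this
end LogMulNilpotentAux
/-- For nilpotent `u v` in a commutative `ℚ`-algebra `A`, with
`w = u + v - u*v` (so `(1-u)*(1-v) = 1-w`), `w` is nilpotent and the truncated
logarithms satisfy `ln((1-u)(1-v)) = ln(1-u) + ln(1-v)`. -/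
theorem log_mul_of_nilpotent (A : Type*) [CommRing A] [Algebra ℚ A] (u v : A)
    (hu : IsNilpotent u) (hv : IsNilpotent v) :
    IsNilpotent (u + v - u * v) ∧
    ∀ M : ℕ, u ^ (M + 1) = 0 → v ^ (M + 1) = 0 → (u + v - u * v) ^ (M + 1) = 0 →
      (-∑ n ∈ Finset.Icc 1 M, ((n : ℚ)⁻¹) • (u + v - u * v) ^ n) =
        (-∑ n ∈ Finset.Icc 1 M, ((n : ℚ)⁻¹) • u ^ n) +
        (-∑ n ∈ Finset.Icc 1 M, ((n : ℚ)⁻¹) • v ^ n) := by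
  constructor
  · exact Commute.isNilpotent_sub (Commute.all _ _)
      (Commute.isNilpotent_add (Commute.all u v) hu hv)
      (Commute.isNilpotent_mul_right (Commute.all u v) hu)
  intro M huM hvM hwM
  set K := 2 * M + 2 with hK
  set f : Fin 2 → A := ![u, v] with hf
  set P : MvPolynomial (Fin 2) ℚ :=
    (∑ n ∈ Finset.Icc 1 K, ((n:ℚ)⁻¹) • (MvPolynomial.X 0 + MvPolynomial.X 1
        - MvPolynomial.X 0 * MvPolynomial.X 1) ^ n)
      - (∑ n ∈ Finset.Icc 1 K, ((n:ℚ)⁻¹) • (MvPolynomial.X 0 : MvPolynomial (Fin 2) ℚ) ^ n)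
      - (∑ n ∈ Finset.Icc 1 K, ((n:ℚ)⁻¹) • (MvPolynomial.X 1 : MvPolynomial (Fin 2) ℚ) ^ n)
    with hPdef
  -- evaluation of P at (u,v) is zero
  have hPzero : MvPolynomial.aeval f P = 0 := by
    rw [P.as_sum, map_sum]
    refine Finset.sum_eq_zero fun m hm => ?_
    have hcoeff : ¬ (m 0 ≤ M ∧ m 1 ≤ M) := by
      intro ⟨h0, h1⟩
      exact (MvPolynomial.mem_support_iff.mp hm)
        (LogMulNilpotentAux.coeff_P_eq_zero M m h0 h1)
    rw [MvPolynomial.aeval_monomial]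
    have hprod : (m.prod fun i k => f i ^ k) = u ^ m 0 * v ^ m 1 := by
      rw [Finsupp.prod_fintype _ _ fun i => pow_zero (f i), Fin.prod_univ_two]
      rfl
    rw [hprod]
    rcases not_and_or.mp hcoeff with h | h
    · rw [pow_eq_zero_of_le (by omega : M + 1 ≤ m 0) huM, zero_mul, mul_zero]
    · rw [pow_eq_zero_of_le (by omega : M + 1 ≤ m 1) hvM, mul_zero, mul_zero]
  have hexpand : MvPolynomial.aeval f P
      = (∑ n ∈ Finset.Icc 1 K, ((n:ℚ)⁻¹) • (u + v - u * v) ^ n)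
        - (∑ n ∈ Finset.Icc 1 K, ((n:ℚ)⁻¹) • u ^ n)
        - (∑ n ∈ Finset.Icc 1 K, ((n:ℚ)⁻¹) • v ^ n) := by
    rw [hPdef]
    simp only [map_sub, map_sum, map_smul, map_pow, map_add, map_mul,
      MvPolynomial.aeval_X]
    norm_num [hf]
  have h0 : (∑ n ∈ Finset.Icc 1 K, ((n:ℚ)⁻¹) • (u + v - u * v) ^ n)
        - (∑ n ∈ Finset.Icc 1 K, ((n:ℚ)⁻¹) • u ^ n)
        - (∑ n ∈ Finset.Icc 1 K, ((n:ℚ)⁻¹) • v ^ n) = 0 := by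
    rw [← hexpand, hPzero]
  have trunc : ∀ x : A, x ^ (M+1) = 0 →
      (∑ n ∈ Finset.Icc 1 K, ((n:ℚ)⁻¹) • x ^ n) = ∑ n ∈ Finset.Icc 1 M, ((n:ℚ)⁻¹) • x ^ n := by
    intro x hx
    refine (Finset.sum_subset (Finset.Icc_subset_Icc_right (by omega)) ?_).symm
    intro n hn hn'
    rw [Finset.mem_Icc] at hn
    rw [Finset.mem_Icc, not_and_or] at hn'
    rw [pow_eq_zero_of_le (by omega : M + 1 ≤ n) hx, smul_zero]
  have tw := trunc _ hwM
  have tu := trunc _ huM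
  have tv := trunc _ hvM
  linear_combination -h0 + tw - tu - tv
end

section
/- Let R = ℚ[T]/(T^{n+1}) with t the image of T, let k ≥ 0 be a natural number, and let ψ : R → R be any ℚ-algebra homomorphism satisfying ψ(t) = 1 − (1−t)^k. Set x := −(t + (1/2)t² + (1/3)t³ + ⋯ + (1/n)tⁿ) ∈ R. Then ψ(x) = k·x, i.e. x is an eigenvector of the k-th Adams operator on R with eigenvalue k. -/
/-- The ring `R = ℚ[T]/(T^(n+1))`. -/
abbrev PolyQuot (n : ℕ) : Type :=
  Polynomial ℚ ⧸ Ideal.span {(Polynomial.X : Polynomial ℚ) ^ (n + 1)}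

/-- The image `t` of `T` in `ℚ[T]/(T^(n+1))`. -/
noncomputable def tgen (n : ℕ) : PolyQuot n :=
  Ideal.Quotient.mk _ Polynomial.X

open Polynomial Finset in
private lemma deriv_logTrunc (n : ℕ) (P : ℚ[X]) :
    derivative (∑ j ∈ range n, ((j : ℚ) + 1)⁻¹ • P ^ (j + 1)) =
      (∑ j ∈ range n, P ^ j) * derivative P := by
  rw [derivative_sum, Finset.sum_mul]
  refine Finset.sum_congr rfl fun j _ => ?_
  rw [smul_eq_C_mul, derivative_C_mul, derivative_pow, Nat.add_sub_cancel, ← mul_assoc,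
    ← mul_assoc, ← C_mul]
  have : ((j : ℚ) + 1)⁻¹ * ((j : ℕ) + 1 : ℚ) = 1 := by
    push_cast
    exact inv_mul_cancel₀ (by positivity)
  push_cast at this ⊢
  rw [this, C_1, one_mul]

open Polynomial Finset in
private lemma adams_key (n k : ℕ) :
    (X : ℚ[X]) ^ (n + 1) ∣
      (∑ i ∈ Icc 1 n, ((i : ℚ))⁻¹ • (1 - (1 - X) ^ k) ^ i)
        - (k : ℚ[X]) * ∑ i ∈ Icc 1 n, ((i : ℚ))⁻¹ • X ^ i := by
  set U : ℚ[X] := 1 - (1 - X) ^ k with hU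
  have hIcc : ∀ P : ℚ[X], ∑ i ∈ Icc 1 n, ((i : ℚ))⁻¹ • P ^ i
      = ∑ j ∈ range n, ((j : ℚ) + 1)⁻¹ • P ^ (j + 1) := by
    intro P
    rw [← Finset.Ico_add_one_right_eq_Icc, Finset.sum_Ico_eq_sum_range]
    refine Finset.sum_congr rfl fun j _ => ?_
    rw [add_comm 1 j]
    push_cast
    ring_nf
  have hXU : X ∣ U := by
    rw [X_dvd_iff, hU, coeff_zero_eq_eval_zero]
    simp
  set G : ℚ[X] := ∑ j ∈ range n, ((j : ℚ) + 1)⁻¹ • U ^ (j + 1) with hG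
  set H : ℚ[X] := ∑ j ∈ range n, ((j : ℚ) + 1)⁻¹ • X ^ (j + 1) with hH
  rw [hIcc, hIcc, ← hG, ← hH]
  set F : ℚ[X] := G - (k : ℚ[X]) * H with hF
  -- (1-X) * U' = k * (1-U)
  have hU' : (1 - X) * derivative U = (k : ℚ[X]) * (1 - U) := by
    have h1 : derivative U = C (k : ℚ) * (1 - X) ^ (k - 1) := by
      rw [hU, derivative_sub, derivative_one, derivative_pow, derivative_sub,
        derivative_one, derivative_X]
      ring
    rw [h1, hU, sub_sub_cancel]
    cases k with
    | zero => simp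
    | succ m =>
      rw [C_eq_natCast]
      rw [Nat.add_sub_cancel]
      push_cast
      ring_nf
  -- (1-X) * F' = k * (X^n - U^n)
  have hF' : (1 - X) * derivative F = (k : ℚ[X]) * (X ^ n - U ^ n) := by
    have hg := deriv_logTrunc n U
    have hh := deriv_logTrunc n X
    rw [hF, derivative_sub, derivative_mul]
    rw [← hG] at hg
    rw [← hH] at hh
    have hgeomU : (1 - U) * ∑ j ∈ range n, U ^ j = 1 - U ^ n := by
      have := geom_sum_mul U n
      linear_combination -this
    have hgeomX : ((1 : ℚ[X]) - X) * ∑ j ∈ range n, X ^ j = 1 - X ^ n := by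
      have := geom_sum_mul (X : ℚ[X]) n
      linear_combination -this
    have hderivk : derivative (k : ℚ[X]) = 0 := by
      simp
    rw [hg, hh, hderivk]
    rw [derivative_X]
    linear_combination (∑ j ∈ range n, U ^ j) * hU' + (k : ℚ[X]) * hgeomU
      - (k : ℚ[X]) * hgeomX
  -- X^n divides F'
  have hdvdF' : (X : ℚ[X]) ^ n ∣ derivative F := by
    have h1 : (X : ℚ[X]) ^ n ∣ (1 - X) * derivative F := by
      rw [hF']
      exact Dvd.dvd.mul_left (dvd_sub (dvd_refl _) (pow_dvd_pow_of_dvd hXU n)) _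
    have hcop : IsCoprime ((X : ℚ[X]) ^ n) (1 - X) :=
      (IsCoprime.pow_left ⟨1, 1, by ring⟩)
    exact hcop.dvd_of_dvd_mul_left h1
  -- X divides F
  have hdvdF : (X : ℚ[X]) ∣ F := by
    have hg : X ∣ G := Finset.dvd_sum fun j _ => by
      rw [smul_eq_C_mul]
      exact Dvd.dvd.mul_left (dvd_pow hXU (Nat.succ_ne_zero j)) _
    have hh : X ∣ H := Finset.dvd_sum fun j _ => by
      rw [smul_eq_C_mul]
      exact Dvd.dvd.mul_left (dvd_pow (dvd_refl X) (Nat.succ_ne_zero j)) _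
    exact dvd_sub hg (hh.mul_left _)
  rw [X_pow_dvd_iff]
  intro d hd
  match d, hd with
  | 0, _ => exact (X_dvd_iff.mp hdvdF)
  | (e + 1), hd =>
    have he : e < n := by omega
    have h0 : (derivative F).coeff e = 0 := by
      rw [X_pow_dvd_iff] at hdvdF'
      exact hdvdF' e he
    rw [coeff_derivative] at h0
    have : ((e : ℚ) + 1) ≠ 0 := by positivity
    exact (mul_eq_zero.mp h0).resolve_right this

/-- in `R = ℚ[T]/(T^(n+1))`, if `ψ` is a `ℚ`-algebra endomorphism with
`ψ t = 1 - (1-t)^k` (the `k`-th Adams operator), then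
`x = -(t + (1/2)t² + ⋯ + (1/n)tⁿ)` satisfies `ψ x = k • x`. -/
theorem adams_eigenvector (n : ℕ) (hn : 1 ≤ n) (k : ℕ)
    (ψ : PolyQuot n →ₐ[ℚ] PolyQuot n)
    (hψ : ψ (tgen n) = 1 - (1 - tgen n) ^ k) :
    ψ (-(∑ i ∈ Finset.Icc 1 n, ((i : ℚ)⁻¹) • (tgen n) ^ i)) =
      (k : PolyQuot n) * (-(∑ i ∈ Finset.Icc 1 n, ((i : ℚ)⁻¹) • (tgen n) ^ i)) := by
  open Polynomial Finset in
  have key := adams_key n k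
  set I : Ideal ℚ[X] := Ideal.span {(X : ℚ[X]) ^ (n + 1)} with hI
  have hmem : ((∑ i ∈ Finset.Icc 1 n, ((i : ℚ))⁻¹ • (1 - (1 - X) ^ k) ^ i)
      - (k : ℚ[X]) * ∑ i ∈ Finset.Icc 1 n, ((i : ℚ))⁻¹ • (X : ℚ[X]) ^ i) ∈ I := by
    rw [hI, Ideal.mem_span_singleton]
    exact key
  have hmk : (Ideal.Quotient.mkₐ ℚ I) ((∑ i ∈ Finset.Icc 1 n, ((i : ℚ))⁻¹ • (1 - (1 - X) ^ k) ^ i)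
      - (k : ℚ[X]) * ∑ i ∈ Finset.Icc 1 n, ((i : ℚ))⁻¹ • (X : ℚ[X]) ^ i) = 0 := by
    rw [Ideal.Quotient.mkₐ_eq_mk, Ideal.Quotient.eq_zero_iff_mem]
    exact hmem
  rw [map_sub, sub_eq_zero, map_sum, map_mul, map_sum] at hmk
  simp only [map_smul, map_pow, map_sub, map_one, map_natCast,
    Ideal.Quotient.mkₐ_eq_mk] at hmk
  have htg : (Ideal.Quotient.mk I) (X : ℚ[X]) = tgen n := rfl
  rw [htg] at hmk
  have hx : ψ (∑ i ∈ Finset.Icc 1 n, ((i : ℚ)⁻¹) • (tgen n) ^ i)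
      = ∑ i ∈ Finset.Icc 1 n, ((i : ℚ)⁻¹) • (1 - (1 - tgen n) ^ k) ^ i := by
    rw [map_sum]
    refine Finset.sum_congr rfl fun i _ => ?_
    rw [map_smul, map_pow, hψ]
  rw [map_neg, hx, hmk]
  ring
end

section
/- Let R = ℚ[T]/(T^{n+1}) with t the image of T, let k ≥ 0 be a natural number, and let ψ : R → R be any ℚ-algebra homomorphism satisfying ψ(t) = 1 − (1−t)^k. Set x := −(t + (1/2)t² + ⋯ + (1/n)tⁿ) ∈ R. Then for every natural number i ≥ 1 one has ψ(xⁱ) = kⁱ·xⁱ, i.e. xⁱ is an eigenvector of the k-th Adams operator on R with eigenvalue kⁱ. -/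
section AdamsAux
open Polynomial Finset

open Polynomial Finset

lemma key_dvd (n k : ℕ) :
    (X : ℚ[X]) ^ (n + 1) ∣
      ((∑ j ∈ Icc 1 n, ((j : ℚ)⁻¹) • (X : ℚ[X]) ^ j).comp (1 - (1 - X) ^ k)
        - C (k : ℚ) * ∑ j ∈ Icc 1 n, ((j : ℚ)⁻¹) • (X : ℚ[X]) ^ j) := by
  set P : ℚ[X] := ∑ j ∈ Icc 1 n, ((j : ℚ)⁻¹) • (X : ℚ[X]) ^ j with hP
  set g : ℚ[X] := 1 - (1 - X) ^ k with hg
  set D : ℚ[X] := P.comp g - C (k : ℚ) * P with hD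
  have hP' : derivative P = ∑ j ∈ range n, (X : ℚ[X]) ^ j := by
    rw [hP, derivative_sum]
    have hIcc : Finset.Icc 1 n = Finset.Ico 1 (n + 1) := by
      rw [Finset.Ico_add_one_right_eq_Icc]
    rw [hIcc, Finset.sum_Ico_eq_sum_range]
    simp only [Nat.add_sub_cancel]
    refine Finset.sum_congr rfl fun j hj => ?_
    rw [derivative_smul, derivative_X_pow]
    have h1 : ((1 + j : ℕ) : ℚ)⁻¹ • (C ((1 + j : ℕ) : ℚ)) = 1 := by
      rw [smul_C, smul_eq_mul, inv_mul_cancel₀ (by positivity)]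
      simp
    rw [← smul_mul_assoc, h1, one_mul]
    simp [Nat.add_sub_cancel, add_comm 1 j]
  have hgeom : ((X : ℚ[X]) - 1) * derivative P = X ^ n - 1 := by
    rw [hP', mul_comm, geom_sum_mul]
  have hcomp : (g - 1) * (derivative P).comp g = g ^ n - 1 := by
    have h := congrArg (fun p : ℚ[X] => p.comp g) hgeom
    simpa [mul_comp, sub_comp, pow_comp] using h
  have hg' : derivative g = C (k : ℚ) * (1 - X) ^ (k - 1) := by
    rw [hg, derivative_sub, derivative_one, derivative_pow, derivative_sub, derivative_one,
      derivative_X]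
    ring
  have hstep : ((X : ℚ[X]) - 1) * derivative g = C (k : ℚ) * (g - 1) := by
    rcases k with _ | k
    · simp [hg', hg]
    · rw [hg', hg, Nat.add_sub_cancel]
      have h2 : ((1 : ℚ[X]) - X) ^ k * (1 - X) = (1 - X) ^ (k + 1) := by
        rw [← pow_succ]
      push_cast
      linear_combination (-(C ((k : ℚ) + 1))) * h2
  have hdD : derivative D = derivative g * (derivative P).comp g - C (k : ℚ) * derivative P := by
    rw [hD, derivative_sub, derivative_comp, derivative_C_mul]
  have hD' : ((X : ℚ[X]) - 1) * derivative D = C (k : ℚ) * (g ^ n - X ^ n) := by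
    rw [hdD]
    linear_combination (derivative P).comp g * hstep + C (k : ℚ) * hcomp - C (k : ℚ) * hgeom
  have hXg : (X : ℚ[X]) ∣ g := by
    rw [X_dvd_iff, coeff_zero_eq_eval_zero]
    simp [hg]
  have hXn : (X : ℚ[X]) ^ n ∣ derivative D := by
    have h1 : (X : ℚ[X]) ^ n ∣ ((X : ℚ[X]) - 1) * derivative D := by
      rw [hD']
      exact Dvd.dvd.mul_left (dvd_sub (pow_dvd_pow_of_dvd hXg n) dvd_rfl) _
    have hcop : IsCoprime ((X : ℚ[X]) ^ n) ((X : ℚ[X]) - 1) :=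
      (IsCoprime.pow_left (⟨1, -1, by ring⟩ : IsCoprime ((X : ℚ[X])) (X - 1)))
    exact hcop.dvd_of_dvd_mul_left h1
  have hP0 : P.eval 0 = 0 := by
    rw [hP, eval_finset_sum]
    refine Finset.sum_eq_zero fun j hj => ?_
    have : j ≠ 0 := by have := (Finset.mem_Icc.mp hj).1; omega
    simp [this]
  rw [X_pow_dvd_iff]
  intro d hd
  rcases d with _ | m
  · rw [coeff_zero_eq_eval_zero, hD, eval_sub, eval_mul, eval_comp]
    have hg0 : g.eval 0 = 0 := by simp [hg]
    rw [hg0, hP0]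
    simp
  · have hm : m < n := by omega
    have h0 : (derivative D).coeff m = 0 := by
      rw [X_pow_dvd_iff] at hXn
      exact hXn m hm
    rw [coeff_derivative] at h0
    have : ((m : ℚ) + 1) ≠ 0 := by positivity
    exact (mul_eq_zero.mp h0).resolve_right this

end AdamsAux


/-- in `R = ℚ[T]/(T^(n+1))`, if `ψ` is a `ℚ`-algebra endomorphism with
`ψ t = 1 - (1-t)^k` (the `k`-th Adams operator), then for every `i ≥ 1` the power
`xⁱ` of `x = -(t + (1/2)t² + ⋯ + (1/n)tⁿ)` satisfies `ψ (xⁱ) = kⁱ • xⁱ`. -/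
theorem adams_eigenvector_pow (n : ℕ) (hn : 1 ≤ n) (k : ℕ)
    (ψ : PolyQuot n →ₐ[ℚ] PolyQuot n)
    (hψ : ψ (tgen n) = 1 - (1 - tgen n) ^ k)
    (i : ℕ) (hi : 1 ≤ i) :
    ψ ((-(∑ j ∈ Finset.Icc 1 n, ((j : ℚ)⁻¹) • (tgen n) ^ j)) ^ i) =
      (k : PolyQuot n) ^ i *
        (-(∑ j ∈ Finset.Icc 1 n, ((j : ℚ)⁻¹) • (tgen n) ^ j)) ^ i := by
  set t : PolyQuot n := tgen n with ht'
  set P : Polynomial ℚ := ∑ j ∈ Finset.Icc 1 n,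
    ((j : ℚ)⁻¹) • (Polynomial.X : Polynomial ℚ) ^ j with hPdef
  set g : Polynomial ℚ := 1 - (1 - Polynomial.X) ^ k with hgdef
  have ht : t ^ (n + 1) = 0 := by
    rw [ht', tgen, ← map_pow]
    exact Ideal.Quotient.eq_zero_iff_mem.mpr (Ideal.subset_span (Set.mem_singleton _))
  have hSa : (∑ j ∈ Finset.Icc 1 n, ((j : ℚ)⁻¹) • t ^ j) = Polynomial.aeval t P := by
    rw [hPdef, map_sum]
    refine Finset.sum_congr rfl fun j hj => ?_
    rw [map_smul, map_pow, Polynomial.aeval_X]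
  have hkey : Polynomial.aeval t (P.comp g) = (k : PolyQuot n) * Polynomial.aeval t P := by
    obtain ⟨c, hc⟩ := key_dvd n k
    have h2 : Polynomial.aeval t (P.comp g - Polynomial.C (k : ℚ) * P) = 0 := by
      rw [hc, map_mul, map_pow, Polynomial.aeval_X, ht, zero_mul]
    rw [map_sub, map_mul, Polynomial.aeval_C, sub_eq_zero] at h2
    simpa using h2
  have hx : ψ (Polynomial.aeval t P) = (k : PolyQuot n) * Polynomial.aeval t P := by
    rw [← Polynomial.aeval_algHom_apply, hψ, ← hkey, Polynomial.aeval_comp]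
    congr 1
    rw [hgdef]
    simp
  rw [map_pow, map_neg, hSa, hx,
    show -((k : PolyQuot n) * Polynomial.aeval t P)
        = (k : PolyQuot n) * (-(Polynomial.aeval t P)) by ring,
    mul_pow]
end
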